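/- Let S be a monoid with zero 0_S and identity 1_S, let λ be a nonempty set, let h : S → S be an automorphism of the semigroup S, let φ : λ → λ be a bijection, and let u : λ → H₁ be a map into the group of units H₁ of S. Then the map σ on the Brandt λ⁰-extension B⁰_λ(S) defined by σ(α, s, β) = (φ(α), u(α)·h(s)·(u(β))⁻¹, φ(β)) for nonzero s and σ(0) = 0 is an automorphism of the semigroup B⁰_λ(S). -/

import Mathlib

/-- The Brandt λ⁰-extension `B⁰_Λ(S)` of a semigroup `S` with zero: its underlying
set is `(Λ × (S \ {0_S}) × Λ) ∪ {0}`, where `none` plays the role of the zero `0`. -/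
def Brandt (Λ S : Type*) [Zero S] : Type _ :=
  Option (Λ × {s : S // s ≠ 0} × Λ)

namespace Brandt

variable {Λ S : Type*}

instance [Zero S] : Zero (Brandt Λ S) := ⟨none⟩

open Classical in
/-- `(α, a, β)·(γ, b, δ) = (α, ab, δ)` if `β = γ` and `ab ≠ 0_S`, and `0` otherwise;
`0` is a two-sided zero. -/
noncomputable instance [Zero S] [Mul S] : Mul (Brandt Λ S) :=
  ⟨fun x y =>
    match x, y with
    | some (α, a, β), some (γ, b, δ) =>
        if h : β = γ ∧ a.1 * b.1 ≠ 0 then some (α, ⟨a.1 * b.1, h.2⟩, δ) else 0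
    | _, _ => 0⟩

open Classical in
/-- `Brandt.mk α s β` is the element `(α, s, β)` of `B⁰_Λ(S)` if `s ≠ 0`, and `0` otherwise. -/
noncomputable def mk [Zero S] (α : Λ) (s : S) (β : Λ) : Brandt Λ S :=
  if h : s ≠ 0 then some (α, ⟨s, h⟩, β) else 0

end Brandt

/-- An automorphism of a semigroup: a bijective map preserving the multiplication. -/
def IsSemigroupAut {T : Type*} [Mul T] (σ : T → T) : Prop :=
  Function.Bijective σ ∧ ∀ x y : T, σ (x * y) = σ x * σ y

section BrandtAux

variable {Λ S : Type*} [MonoidWithZero S]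

open Classical in
lemma brandt_mk_mul_mk (α β γ δ : Λ) (s t : S) (hs : s ≠ 0) (ht : t ≠ 0) :
    (Brandt.mk α s β : Brandt Λ S) * Brandt.mk γ t δ =
      if β = γ then Brandt.mk α (s * t) δ else 0 := by
  erw [Brandt.mk, dif_pos hs, Brandt.mk, dif_pos ht]
  show (if h : β = γ ∧ s * t ≠ 0 then some (α, ⟨s * t, h.2⟩, δ) else 0 : Brandt Λ S) = _
  by_cases hβγ : β = γ
  · subst hβγ
    rw [if_pos rfl, Brandt.mk]
    by_cases hst : s * t ≠ 0
    · erw [dif_pos (show β = β ∧ s * t ≠ 0 from ⟨rfl, hst⟩), dif_pos hst]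
    · erw [dif_neg (show ¬(β = β ∧ s * t ≠ 0) by tauto), dif_neg hst]
  · erw [dif_neg (show ¬(β = γ ∧ s * t ≠ 0) by tauto), if_neg hβγ]

lemma brandt_cases (x : Brandt Λ S) :
    x = 0 ∨ ∃ (α β : Λ) (s : S), s ≠ 0 ∧ x = Brandt.mk α s β := by
  match x with
  | none => exact Or.inl rfl
  | some (α, a, β) =>
    refine Or.inr ⟨α, β, a.1, a.2, ?_⟩
    erw [Brandt.mk, dif_pos a.2]

lemma brandt_zero_mul (x : Brandt Λ S) : (0 : Brandt Λ S) * x = 0 := by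
  match x with
  | none => rfl
  | some (α, a, β) => rfl

lemma brandt_mul_zero (x : Brandt Λ S) : x * (0 : Brandt Λ S) = 0 := by
  match x with
  | none => rfl
  | some (α, a, β) => rfl

lemma brandt_mk_zero (α β : Λ) : (Brandt.mk α (0 : S) β : Brandt Λ S) = 0 := by
  erw [Brandt.mk, dif_neg (by simp)]

lemma brandt_mk_ne_zero (α β : Λ) (s : S) (hs : s ≠ 0) :
    (Brandt.mk α s β : Brandt Λ S) ≠ 0 := by
  erw [Brandt.mk, dif_pos hs]
  exact Option.some_ne_none _

lemma brandt_mk_inj {α β γ δ : Λ} {s t : S} (hs : s ≠ 0) (ht : t ≠ 0)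
    (he : (Brandt.mk α s β : Brandt Λ S) = Brandt.mk γ t δ) : α = γ ∧ s = t ∧ β = δ := by
  erw [Brandt.mk, dif_pos hs, Brandt.mk, dif_pos ht] at he
  have h2 := Option.some_injective _ he
  simp only [Prod.mk.injEq, Subtype.mk.injEq] at h2
  exact ⟨h2.1, h2.2.1, h2.2.2⟩

lemma brandt_mulequiv_map_zero (h : S ≃* S) : h 0 = 0 := by
  have : h 0 = h 0 * 0 := by
    conv_lhs => rw [show (0 : S) = 0 * h.symm 0 from (zero_mul _).symm]
    rw [map_mul, h.apply_symm_apply]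
  rw [this, mul_zero]

lemma brandt_mulequiv_ne_zero (h : S ≃* S) {s : S} (hs : s ≠ 0) : h s ≠ 0 := fun hc =>
  hs (h.injective (by rw [hc, brandt_mulequiv_map_zero]))

end BrandtAux

/-- Let `S` be a monoid with zero, `Λ` a nonempty set, `h` an automorphism of the
semigroup `S`, `φ : Λ → Λ` a bijection and `u : Λ → H₁` a map into the group of units
of `S`. Then the map `σ` on `B⁰_Λ(S)` defined by
`σ(α, s, β) = (φ(α), u(α)·h(s)·(u(β))⁻¹, φ(β))` for nonzero `s` and `σ(0) = 0` is an
automorphism of the semigroup `B⁰_Λ(S)`. -/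
theorem stmt_0 {Λ S : Type*} [Nonempty Λ] [MonoidWithZero S]
    (h : S ≃* S) (φ : Λ ≃ Λ) (u : Λ → Sˣ)
    (σ : Brandt Λ S → Brandt Λ S)
    (hσ : ∀ (α β : Λ) (s : S), s ≠ 0 →
      σ (Brandt.mk α s β) = Brandt.mk (φ α) ((u α : S) * h s * ((u β)⁻¹ : Sˣ)) (φ β))
    (hσ0 : σ 0 = 0) :
    IsSemigroupAut σ := by
  classical
  -- the value of σ on `mk`, for every `s` (including zero)
  have hσ' : ∀ (α β : Λ) (s : S),
      σ (Brandt.mk α s β) = Brandt.mk (φ α) ((u α : S) * h s * ((u β)⁻¹ : Sˣ)) (φ β) := by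
    intro α β s
    by_cases hs : s = 0
    · subst hs
      rw [brandt_mk_zero, hσ0, brandt_mulequiv_map_zero, mul_zero, zero_mul, brandt_mk_zero]
    · exact hσ α β s hs
  have mid_ne : ∀ (α β : Λ) (s : S), s ≠ 0 → (u α : S) * h s * ((u β)⁻¹ : Sˣ) ≠ 0 := by
    intro α β s hs
    simp only [Ne, Units.mul_left_eq_zero, Units.mul_right_eq_zero]
    exact brandt_mulequiv_ne_zero h hs
  constructor
  · -- bijectivity, via an explicit two-sided inverse
    apply Function.bijective_iff_has_inverse.mpr
    refine ⟨fun x =>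
      match x with
      | none => 0
      | some (α, a, β) =>
          Brandt.mk (φ.symm α) (h.symm (((u (φ.symm α))⁻¹ : Sˣ) * a.1 * (u (φ.symm β) : S)))
            (φ.symm β), ?_, ?_⟩
    · -- left inverse
      intro x
      rcases brandt_cases x with rfl | ⟨α, β, s, hs, rfl⟩
      · simp only [hσ0]
      · rw [hσ' α β s]
        have hm := mid_ne α β s hs
        rw [show (Brandt.mk (φ α) ((u α : S) * h s * ((u β)⁻¹ : Sˣ)) (φ β) : Brandt Λ S) =
          some (φ α, ⟨(u α : S) * h s * ((u β)⁻¹ : Sˣ), hm⟩, φ β) from by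
            erw [Brandt.mk, dif_pos hm]]
        show Brandt.mk (φ.symm (φ α))
            (h.symm (((u (φ.symm (φ α)))⁻¹ : Sˣ) *
              ((u α : S) * h s * ((u β)⁻¹ : Sˣ)) * (u (φ.symm (φ β)) : S)))
            (φ.symm (φ β)) = Brandt.mk α s β
        rw [Equiv.symm_apply_apply, Equiv.symm_apply_apply]
        congr 1
        have hmid : (((u α)⁻¹ : Sˣ) : S) * ((u α : S) * h s * ((u β)⁻¹ : Sˣ)) * (u β : S)
            = h s := by
          simp [mul_assoc]
        rw [hmid, h.symm_apply_apply]
    · -- right inverse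
      intro x
      rcases brandt_cases x with rfl | ⟨α, β, s, hs, rfl⟩
      · simp only [hσ0]
      · have hm : h.symm (((u (φ.symm α))⁻¹ : Sˣ) * s * (u (φ.symm β) : S)) ≠ 0 := by
          apply brandt_mulequiv_ne_zero h.symm
          simp only [Ne, Units.mul_left_eq_zero, Units.mul_right_eq_zero]
          exact hs
        rw [show (Brandt.mk α s β : Brandt Λ S) = some (α, ⟨s, hs⟩, β) from by
          erw [Brandt.mk, dif_pos hs]]
        show σ (Brandt.mk (φ.symm α) (h.symm (((u (φ.symm α))⁻¹ : Sˣ) * s * (u (φ.symm β) : S)))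
            (φ.symm β)) = some (α, ⟨s, hs⟩, β)
        rw [hσ' (φ.symm α) (φ.symm β), MulEquiv.apply_symm_apply, Equiv.apply_symm_apply,
          Equiv.apply_symm_apply]
        have : (u (φ.symm α) : S) * (((u (φ.symm α))⁻¹ : Sˣ) * s * (u (φ.symm β) : S)) *
            ((u (φ.symm β))⁻¹ : Sˣ) = s := by
          simp [mul_assoc]
        erw [this, Brandt.mk, dif_pos hs]
  · -- multiplicativity
    intro x y
    rcases brandt_cases x with rfl | ⟨α, β, s, hs, rfl⟩
    · rw [brandt_zero_mul, hσ0, brandt_zero_mul]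
    rcases brandt_cases y with rfl | ⟨γ, δ, t, ht, rfl⟩
    · rw [brandt_mul_zero, hσ0, brandt_mul_zero]
    rw [brandt_mk_mul_mk _ _ _ _ _ _ hs ht, hσ' α β s, hσ' γ δ t,
      brandt_mk_mul_mk _ _ _ _ _ _ (mid_ne α β s hs) (mid_ne γ δ t ht)]
    by_cases hβγ : β = γ
    · subst hβγ
      rw [if_pos rfl, if_pos rfl, hσ' α δ]
      congr 1
      rw [map_mul]
      simp [mul_assoc]
    · rw [if_neg hβγ, if_neg (fun hc => hβγ (φ.injective hc)), hσ0]
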